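/- Let A be a commutative ring, d : A → A a derivation, and f_1, …, f_N ∈ A. For a ∈ A let m_a : A → A denote the multiplication operator x ↦ a·x, and define W_k := e_k(d + m_{f_1}, …, d + m_{f_N})(1) ∈ A for k = 0, …, N, where e_k is the k-th noncommutative elementary symmetric polynomial computed in the ring of additive endomorphisms of A. Then for every additive endomorphism D : A → A satisfying D ∘ m_a − m_a ∘ D = m_{d(a)} for all a ∈ A, one has the identity of endomorphisms (D + m_{f_N})(D + m_{f_{N-1}}) ⋯ (D + m_{f_1}) = ∑_{k=0}^{N} m_{W_k} ∘ D^{N-k}. (This is the factorization identity ∑_m ζ_m ∂^{N-m} = (∂ + μ_{N(-1)}) ⋯ (∂ + μ_{1(-1)}) together with ζ_m = W_{m(-1)}, established in the proof of Lemma 4.3 of the paper, stated for an arbitrary operator D with the same commutation relations with multiplication operators as the derivation d.) -/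

import Mathlib

/-- The `m`-th noncommutative elementary symmetric polynomial of the list
`[X_1, …, X_n]`: the sum over `n ≥ i_1 > i_2 > … > i_m ≥ 1` of
`X_{i_1} X_{i_2} ⋯ X_{i_m}` (factors in strictly decreasing order of index),
with `e_0 = 1`. -/
def ncE {R : Type*} [Semiring R] : ℕ → List R → R
  | 0, _ => 1
  | _ + 1, [] => 0
  | m + 1, x :: xs => ncE (m + 1) xs + ncE m xs * x

/-- The multiplication operator `x ↦ a * x`, as an additive endomorphism. -/
def mulEnd {A : Type*} [NonUnitalNonAssocSemiring A] (a : A) : AddMonoid.End A :=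
  AddMonoidHom.mulLeft a

lemma mulEnd_apply {A : Type*} [NonUnitalNonAssocSemiring A] (a x : A) :
    mulEnd a x = a * x := rfl

lemma mulEnd_one {A : Type*} [NonAssocSemiring A] : mulEnd (1 : A) = 1 := by
  refine AddMonoidHom.ext fun x => ?_
  show (1 : A) * x = x
  rw [one_mul]

lemma mulEnd_zero {A : Type*} [NonUnitalNonAssocSemiring A] : mulEnd (0 : A) = 0 := by
  refine AddMonoidHom.ext fun x => ?_
  show (0 : A) * x = (0 : AddMonoid.End A) x
  rw [zero_mul]; rfl

lemma mulEnd_add {A : Type*} [NonUnitalNonAssocSemiring A] (a b : A) :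
    mulEnd (a + b) = mulEnd a + mulEnd b := by
  refine AddMonoidHom.ext fun x => ?_
  show (a + b) * x = (mulEnd a + mulEnd b) x
  rw [add_mul]; rfl

lemma mulEnd_mul {A : Type*} [NonUnitalSemiring A] (a b : A) :
    mulEnd (a * b) = mulEnd a * mulEnd b := by
  refine AddMonoidHom.ext fun x => ?_
  show (a * b) * x = (mulEnd a * mulEnd b) x
  rw [mul_assoc]; rfl

lemma ncE_zero_eq {R : Type*} [Semiring R] (xs : List R) : ncE 0 xs = 1 := by
  cases xs <;> rfl

lemma ncE_eq_zero {R : Type*} [Semiring R] :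
    ∀ (xs : List R) (m : ℕ), xs.length < m → ncE m xs = 0 := by
  intro xs
  induction xs with
  | nil =>
    intro m hm
    match m, hm with
    | m + 1, _ => rfl
  | cons x xs ih =>
    intro m hm
    match m, hm with
    | m + 1, hm =>
      have h1 : xs.length < m := by simpa using hm
      have h2 : xs.length < m + 1 := Nat.lt_succ_of_lt h1
      show ncE (m + 1) xs + ncE m xs * x = 0
      rw [ih _ h2, ih _ h1, zero_mul, add_zero]

lemma ncE_append_singleton {R : Type*} [Semiring R] (y : R) :
    ∀ (xs : List R) (m : ℕ), ncE (m + 1) (xs ++ [y]) = ncE (m + 1) xs + y * ncE m xs := by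
  intro xs
  induction xs with
  | nil =>
    intro m
    show ncE (m + 1) [] + ncE m [] * y = ncE (m + 1) [] + y * ncE m []
    cases m <;> simp [ncE]
  | cons x xs ih =>
    intro m
    show ncE (m + 1) (xs ++ [y]) + ncE m (xs ++ [y]) * x
        = (ncE (m + 1) xs + ncE m xs * x) + y * ncE m (x :: xs)
    cases m with
    | zero =>
      rw [ih 0]
      simp only [ncE_zero_eq, one_mul, mul_one]
      abel
    | succ m =>
      rw [ih (m + 1), ih m]
      show ncE (m + 2) xs + y * ncE (m + 1) xs + (ncE (m + 1) xs + y * ncE m xs) * x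
          = ncE (m + 2) xs + ncE (m + 1) xs * x + y * (ncE (m + 1) xs + ncE m xs * x)
      rw [add_mul, mul_add, mul_assoc]
      abel

lemma key {A : Type*} [CommRing A] (d D : AddMonoid.End A)
    (hD : ∀ a : A, D * mulEnd a - mulEnd a * D = mulEnd (d a)) (g : List A) :
    ((g.map (fun a => D + mulEnd a)).reverse).prod
      = ∑ k ∈ Finset.range (g.length + 1),
          mulEnd ((ncE k (g.map (fun a => d + mulEnd a))) (1 : A)) * D ^ (g.length - k) := by
  induction g using List.reverseRecOn with
  | nil =>
    show (1 : AddMonoid.End A) = ∑ k ∈ Finset.range 1, mulEnd ((ncE k ([] : List (AddMonoid.End A))) (1 : A)) * D ^ (0 - k)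
    rw [Finset.sum_range_one, ncE_zero_eq]
    show (1 : AddMonoid.End A) = mulEnd (1 : A) * D ^ 0
    rw [mulEnd_one, pow_zero, one_mul]
  | append_singleton g b ih =>
    have hDm : ∀ a : A, D * mulEnd a = mulEnd a * D + mulEnd (d a) := by
      intro a
      have h := hD a
      rw [sub_eq_iff_eq_add] at h
      rw [h, add_comm]
    rw [List.map_append, List.reverse_append, List.map_append]
    simp only [List.map_cons, List.map_nil, List.reverse_cons, List.reverse_nil,
      List.nil_append, List.singleton_append, List.prod_cons, List.length_append,
      List.length_map, List.length_cons, List.length_nil, Nat.zero_add, zero_add]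
    set n := g.length with hn
    set Ys := g.map (fun a => d + mulEnd a) with hYs
    have hYl : Ys.length = n := by simp [hYs, hn]
    set W : ℕ → A := fun k => (ncE k Ys) (1 : A) with hW
    set Yb : AddMonoid.End A := d + mulEnd b with hYb
    rw [ih]
    have hL : (D + mulEnd b) * (∑ k ∈ Finset.range (n + 1), mulEnd (W k) * D ^ (n - k))
        = ((∑ k ∈ Finset.range n, mulEnd (W (k + 1)) * D ^ (n - k)) + D ^ (n + 1))
          + ∑ k ∈ Finset.range (n + 1), mulEnd (Yb (W k)) * D ^ (n - k) := by
      rw [add_mul, Finset.mul_sum, Finset.mul_sum]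
      have h1 : ∀ k ∈ Finset.range (n + 1),
          D * (mulEnd (W k) * D ^ (n - k))
            = mulEnd (W k) * D ^ ((n - k) + 1) + mulEnd (d (W k)) * D ^ (n - k) := by
        intro k _
        rw [← mul_assoc, hDm, add_mul, mul_assoc, ← pow_succ']
      have h2 : ∀ k ∈ Finset.range (n + 1),
          mulEnd b * (mulEnd (W k) * D ^ (n - k)) = mulEnd (mulEnd b (W k)) * D ^ (n - k) := by
        intro k _
        rw [← mul_assoc, ← mulEnd_mul]
        rfl
      rw [Finset.sum_congr rfl h1, Finset.sum_congr rfl h2, Finset.sum_add_distrib]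
      have h3 : ∑ k ∈ Finset.range (n + 1), mulEnd (W k) * D ^ ((n - k) + 1)
          = (∑ k ∈ Finset.range n, mulEnd (W (k + 1)) * D ^ (n - k)) + D ^ (n + 1) := by
        rw [Finset.sum_range_succ']
        congr 1
        · apply Finset.sum_congr rfl
          intro k hk
          have hkn : k < n := Finset.mem_range.mp hk
          have : n - (k + 1) + 1 = n - k := by omega
          rw [this]
        · have hW0 : W 0 = 1 := by
            show (ncE 0 Ys) (1 : A) = 1
            rw [ncE_zero_eq]; rfl
          rw [hW0, mulEnd_one, one_mul, Nat.sub_zero]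
      have h4 : (∑ k ∈ Finset.range (n + 1), mulEnd (d (W k)) * D ^ (n - k))
            + ∑ k ∈ Finset.range (n + 1), mulEnd (mulEnd b (W k)) * D ^ (n - k)
          = ∑ k ∈ Finset.range (n + 1), mulEnd (Yb (W k)) * D ^ (n - k) := by
        rw [← Finset.sum_add_distrib]
        apply Finset.sum_congr rfl
        intro k _
        rw [← add_mul, ← mulEnd_add]
        rfl
      rw [h3]
      rw [add_assoc, h4]
    rw [hL]
    have hR : ∑ k ∈ Finset.range (n + 1 + 1),
          mulEnd ((ncE k (Ys ++ [Yb])) (1 : A)) * D ^ (n + 1 - k)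
        = ((∑ k ∈ Finset.range n, mulEnd (W (k + 1)) * D ^ (n - k)) + D ^ (n + 1))
          + ∑ k ∈ Finset.range (n + 1), mulEnd (Yb (W k)) * D ^ (n - k) := by
      rw [Finset.sum_range_succ']
      have h0 : mulEnd ((ncE 0 (Ys ++ [Yb])) (1 : A)) * D ^ (n + 1 - 0) = D ^ (n + 1) := by
        rw [ncE_zero_eq]
        show mulEnd (1 : A) * D ^ (n + 1 - 0) = D ^ (n + 1)
        rw [mulEnd_one, one_mul, Nat.sub_zero]
      rw [h0]
      have h5 : ∀ k ∈ Finset.range (n + 1),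
          mulEnd ((ncE (k + 1) (Ys ++ [Yb])) (1 : A)) * D ^ (n + 1 - (k + 1))
            = mulEnd (W (k + 1)) * D ^ (n - k) + mulEnd (Yb (W k)) * D ^ (n - k) := by
        intro k _
        rw [ncE_append_singleton]
        have : ((ncE (k + 1) Ys + Yb * ncE k Ys)) (1 : A) = W (k + 1) + Yb (W k) := rfl
        rw [this, mulEnd_add, add_mul, Nat.succ_sub_succ]
      rw [Finset.sum_congr rfl h5, Finset.sum_add_distrib]
      have h6 : ∑ k ∈ Finset.range (n + 1), mulEnd (W (k + 1)) * D ^ (n - k)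
          = ∑ k ∈ Finset.range n, mulEnd (W (k + 1)) * D ^ (n - k) := by
        rw [Finset.sum_range_succ]
        have : W (n + 1) = 0 := by
          show (ncE (n + 1) Ys) (1 : A) = 0
          rw [ncE_eq_zero Ys (n + 1) (by rw [hYl]; omega)]
          rfl
        rw [this, mulEnd_zero, zero_mul, add_zero]
      rw [h6]
      abel
    rw [hR]

/-- The factorization identity from the proof of Lemma 4.3: with
`W_k := e_k(d + m_{f_1}, …, d + m_{f_N})(1)`, for any additive endomorphism `D`
with `D ∘ m_a − m_a ∘ D = m_{d(a)}`, one has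
`(D + m_{f_N}) ⋯ (D + m_{f_1}) = ∑_{k=0}^{N} m_{W_k} ∘ D^{N-k}`. -/
theorem stmt5 {A : Type*} [CommRing A] (N : ℕ) (d : AddMonoid.End A)
    (hd : ∀ a : A, d * mulEnd a - mulEnd a * d = mulEnd (d a))
    (f : Fin N → A) (D : AddMonoid.End A)
    (hD : ∀ a : A, D * mulEnd a - mulEnd a * D = mulEnd (d a)) :
    ((List.ofFn fun i => D + mulEnd (f i)).reverse).prod
      = ∑ k ∈ Finset.range (N + 1),
          mulEnd ((ncE k (List.ofFn fun i => d + mulEnd (f i))) (1 : A)) * D ^ (N - k) := by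
  have h := key d D hD (List.ofFn f)
  simpa [List.map_ofFn, Function.comp_def] using h
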